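/- Let σ > 0 and let f(x) = exp(−x²/(2σ²)) / (σ√(2π)) be the density of the centered Gaussian distribution N(0, σ²). Then the differential floating-point entropy satisfies −∫_ℝ f(x) log₂(|x| · f(x)) dx = 1/2 + (1/2)·log₂(2πe) + γ/(2 ln 2), where γ is the Euler–Mascheroni constant. In particular this value does not depend on σ. -/

import Mathlib

open Real MeasureTheory
open Set

lemma gamma_half_deriv_integral :
    ∫ t in Ioi (0:ℝ), t ^ (-(1/2) : ℝ) * (Real.log t * Real.exp (-t))
      = -Real.sqrt π * (Real.eulerMascheroniConstant + 2 * Real.log 2) := by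
  have h1 := Complex.hasDerivAt_GammaIntegral (s := 1/2) (by norm_num)
  have heq : ∀ᶠ s in nhds (1/2 : ℂ), Complex.Gamma s = Complex.GammaIntegral s := by
    filter_upwards [(isOpen_lt continuous_const Complex.continuous_re).mem_nhds
      (by norm_num : (0:ℝ) < (1/2:ℂ).re)] with s hs
    exact Complex.Gamma_eq_integral hs
  have h2 := h1.congr_of_eventuallyEq heq
  rw [show (1/2 : ℂ) = ((1/2 : ℝ) : ℂ) by norm_num] at h2
  have h4 : HasDerivAt Real.Gamma
      (∫ t : ℝ in Ioi 0, (t:ℂ) ^ (((1/2:ℝ):ℂ) - 1) * (Real.log t * Real.exp (-t))).re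
      (1/2 : ℝ) := h2.real_of_complex
  have h5 := h4.unique Real.hasDerivAt_Gamma_one_half
  have h6 : (∫ t : ℝ in Ioi 0, (t:ℂ) ^ (((1/2:ℝ):ℂ) - 1) * (Real.log t * Real.exp (-t)))
      = ∫ t in Ioi (0:ℝ), ((t ^ (-(1/2) : ℝ) * (Real.log t * Real.exp (-t)) : ℝ) : ℂ) := by
    refine setIntegral_congr_fun measurableSet_Ioi (fun t ht => ?_)
    have ht0 : (0:ℝ) ≤ t := le_of_lt ht
    rw [show (((1/2:ℝ):ℂ) - 1) = ((-(1/2) : ℝ) : ℂ) by norm_num,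
      ← Complex.ofReal_cpow ht0]
    push_cast
    ring
  have h7 : (∫ t in Ioi (0:ℝ), ((t ^ (-(1/2) : ℝ) * (Real.log t * Real.exp (-t)) : ℝ) : ℂ))
      = ((∫ t in Ioi (0:ℝ), t ^ (-(1/2) : ℝ) * (Real.log t * Real.exp (-t)) : ℝ) : ℂ) :=
    integral_ofReal
  rw [h6, h7, Complex.ofReal_re] at h5
  exact h5

lemma gauss_sub (σ : ℝ) (hσ : 0 < σ) (g : ℝ → ℝ) :
    ∫ t in Ioi (0:ℝ), g t = ∫ x in Ioi (0:ℝ), (x / σ^2) * g (x^2/(2*σ^2)) := by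
  have hσ2 : (0:ℝ) < σ^2 := by positivity
  have himg : (fun x : ℝ => x^2/(2*σ^2)) '' Ioi 0 = Ioi 0 := by
    ext t
    constructor
    · rintro ⟨x, hx, rfl⟩
      have hx' : (0:ℝ) < x := hx
      exact mem_Ioi.2 (by positivity)
    · intro ht
      have ht' : (0:ℝ) < t := ht
      refine ⟨Real.sqrt (2*σ^2*t), mem_Ioi.2 (Real.sqrt_pos.2 (by positivity)), ?_⟩
      simp only
      rw [Real.sq_sqrt (by positivity)]
      field_simp
  have hderiv : ∀ x ∈ Ioi (0:ℝ), HasDerivWithinAt (fun x : ℝ => x^2/(2*σ^2))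
      (x / σ^2) (Ioi 0) x := by
    intro x hx
    have h : HasDerivAt (fun x : ℝ => x^2/(2*σ^2)) (x / σ^2) x := by
      have h : HasDerivAt (fun x : ℝ => x^2/(2*σ^2)) (((2:ℕ):ℝ) * x^(2-1) / (2*σ^2)) x :=
        (hasDerivAt_pow 2 x).div_const (2*σ^2)
      convert h using 1
      push_cast
      field_simp
    exact h.hasDerivWithinAt
  have hinj : InjOn (fun x : ℝ => x^2/(2*σ^2)) (Ioi 0) := by
    intro a ha b hb hab
    have ha' : (0:ℝ) < a := ha
    have hb' : (0:ℝ) < b := hb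
    field_simp at hab
    nlinarith [sq_nonneg (a - b), sq_nonneg (a + b)]
  have := integral_image_eq_integral_abs_deriv_smul measurableSet_Ioi hderiv hinj g
  rw [himg] at this
  rw [this]
  refine setIntegral_congr_fun measurableSet_Ioi (fun x hx => ?_)
  have hx' : (0:ℝ) < x := hx
  rw [abs_of_pos (by positivity), smul_eq_mul]

-- |log x| ≤ 2√x + 2/√x for x > 0
lemma abs_log_le (x : ℝ) (hx : 0 < x) :
    |Real.log x| ≤ 2 * x ^ ((1:ℝ)/2) + 2 * x ^ (-(1:ℝ)/2) := by
  have h1 : Real.log x = 2 * Real.log (x ^ ((1:ℝ)/2)) := by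
    rw [Real.log_rpow hx]; ring
  have h2 : -Real.log x = 2 * Real.log (x ^ (-(1:ℝ)/2)) := by
    rw [Real.log_rpow hx]; ring
  have hp1 : (0:ℝ) < x ^ ((1:ℝ)/2) := Real.rpow_pos_of_pos hx _
  have hp2 : (0:ℝ) < x ^ (-(1:ℝ)/2) := Real.rpow_pos_of_pos hx _
  have b1 : Real.log (x ^ ((1:ℝ)/2)) ≤ x ^ ((1:ℝ)/2) - 1 := Real.log_le_sub_one_of_pos hp1
  have b2 : Real.log (x ^ (-(1:ℝ)/2)) ≤ x ^ (-(1:ℝ)/2) - 1 := Real.log_le_sub_one_of_pos hp2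
  rw [abs_le]
  constructor <;> nlinarith

lemma integrableOn_exp_log (b : ℝ) (hb : 0 < b) :
    IntegrableOn (fun x => Real.exp (-b * x^2) * Real.log x) (Ioi 0) := by
  have hg : IntegrableOn (fun x =>
      2 * (x ^ ((1:ℝ)/2) * Real.exp (-b * x^2)) + 2 * (x ^ (-(1:ℝ)/2) * Real.exp (-b * x^2)))
      (Ioi 0) := by
    exact (((integrableOn_rpow_mul_exp_neg_mul_sq hb (by norm_num : (-1:ℝ) < 1/2)).const_mul
      2).add ((integrableOn_rpow_mul_exp_neg_mul_sq hb (by norm_num : (-1:ℝ) < -(1)/2)).const_mul 2))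
  refine Integrable.mono hg ?_ ?_
  · refine (ContinuousOn.aestronglyMeasurable ?_ measurableSet_Ioi)
    exact (Real.continuous_exp.comp (continuous_const.mul (continuous_pow 2))).continuousOn.mul
      (Real.continuousOn_log.mono (fun x hx => ne_of_gt hx))
  · filter_upwards [ae_restrict_mem measurableSet_Ioi] with x hx
    have hx' : (0:ℝ) < x := hx
    have hexp : (0:ℝ) < Real.exp (-b * x^2) := Real.exp_pos _
    have hexp1 : Real.exp (-b * x^2) ≤ 1 := by
      rw [Real.exp_le_one_iff]; nlinarith
    rw [Real.norm_eq_abs, Real.norm_eq_abs, abs_mul, abs_of_pos hexp]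
    have h := abs_log_le x hx'
    have hp1 : (0:ℝ) < x ^ ((1:ℝ)/2) := Real.rpow_pos_of_pos hx' _
    have hp2 : (0:ℝ) < x ^ (-(1:ℝ)/2) := Real.rpow_pos_of_pos hx' _
    have : Real.exp (-b * x^2) * |Real.log x|
        ≤ Real.exp (-b*x^2) * (2 * x ^ ((1:ℝ)/2) + 2 * x ^ (-(1:ℝ)/2)) := by
      apply mul_le_mul_of_nonneg_left ?_ hexp.le
      convert h using 2
    refine this.trans (le_of_le_of_eq ?_ (abs_of_nonneg (by positivity)).symm)
    ring_nf
    exact le_refl _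

-- even extension integrability
lemma integrable_comp_abs {F : ℝ → ℝ} (h : IntegrableOn F (Ioi 0)) :
    Integrable (fun x => F |x|) := by
  have hIoi : IntegrableOn (fun x => F |x|) (Ioi 0) := by
    apply (integrableOn_congr_fun (fun x hx => by
      rw [abs_of_pos (show (0:ℝ) < x from hx)]) measurableSet_Ioi).mpr h
  have hIic : IntegrableOn (fun x => F |x|) (Iic 0) := by
    rw [← Measure.map_neg_eq_self (volume : Measure ℝ)]
    have m : MeasurableEmbedding fun x : ℝ => -x := (Homeomorph.neg ℝ).measurableEmbedding
    rw [m.integrableOn_map_iff]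
    simp_rw [Function.comp_def, abs_neg, neg_preimage, neg_Iic, neg_zero]
    exact Iff.mpr integrableOn_Ici_iff_integrableOn_Ioi hIoi
  have h2 := hIic.union hIoi
  rw [Iic_union_Ioi] at h2
  rwa [integrableOn_univ] at h2

lemma sqrt_half_pow (σ x : ℝ) (hσ : 0 < σ) (hx : 0 < x) :
    (x^2/(2*σ^2)) ^ ((1:ℝ)/2) = x / (Real.sqrt 2 * σ) := by
  rw [← Real.sqrt_eq_rpow,
    show x^2/(2*σ^2) = (x/(Real.sqrt 2*σ))^2 by
      rw [div_pow, mul_pow, Real.sq_sqrt (by norm_num : (0:ℝ) ≤ 2)],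
    Real.sqrt_sq (by positivity)]

lemma Iexp_Ioi (σ : ℝ) (hσ : 0 < σ) :
    ∫ x in Ioi (0:ℝ), Real.exp (-x^2/(2*σ^2)) = σ * Real.sqrt (2*π) / 2 := by
  have h := integral_gaussian_Ioi (1/(2*σ^2))
  have h2 : ∀ x : ℝ, Real.exp (-(1/(2*σ^2)) * x^2) = Real.exp (-x^2/(2*σ^2)) := by
    intro x; congr 1; field_simp
  simp_rw [h2] at h
  rw [h]
  rw [show π / (1/(2*σ^2)) = σ^2 * (2*π) by field_simp,
    Real.sqrt_mul (sq_nonneg σ), Real.sqrt_sq hσ.le]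

lemma Isq_Ioi (σ : ℝ) (hσ : 0 < σ) :
    ∫ x in Ioi (0:ℝ), x^2 * Real.exp (-x^2/(2*σ^2)) = σ^3 * Real.sqrt (2*π) / 2 := by
  have hG : Real.Gamma (3/2) = Real.sqrt π / 2 := by
    rw [show (3/2:ℝ) = 1/2 + 1 by norm_num, Real.Gamma_add_one (by norm_num),
      Real.Gamma_one_half_eq]; ring
  have hint := Real.Gamma_eq_integral (show (0:ℝ) < 3/2 by norm_num)
  have hsub := gauss_sub σ hσ (fun t => Real.exp (-t) * t ^ ((3:ℝ)/2 - 1))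
  rw [← hint, hG] at hsub
  have heq : ∫ x in Ioi (0:ℝ), (x/σ^2) *
        (Real.exp (-(x^2/(2*σ^2))) * (x^2/(2*σ^2)) ^ ((3:ℝ)/2-1))
      = ∫ x in Ioi (0:ℝ), (1/(Real.sqrt 2 * σ^3)) * (x^2 * Real.exp (-x^2/(2*σ^2))) := by
    refine setIntegral_congr_fun measurableSet_Ioi (fun x hx => ?_)
    have hx' : (0:ℝ) < x := hx
    rw [show ((3:ℝ)/2 - 1) = (1:ℝ)/2 by norm_num, sqrt_half_pow σ x hσ hx',
      show -(x^2/(2*σ^2)) = -x^2/(2*σ^2) by ring]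
    have hs2 : Real.sqrt 2 ≠ 0 := by positivity
    field_simp
  rw [heq, integral_const_mul] at hsub
  have hs2 : (0:ℝ) < Real.sqrt 2 := by positivity
  have h : ∫ x in Ioi (0:ℝ), x^2 * Real.exp (-x^2/(2*σ^2))
      = Real.sqrt 2 * σ^3 * (Real.sqrt π / 2) := by
    rw [hsub]; field_simp
  rw [h, show σ^3 * Real.sqrt (2*π)/2 = σ^3 * (Real.sqrt 2 * Real.sqrt π)/2 by
    rw [← Real.sqrt_mul (by norm_num : (0:ℝ) ≤ 2)]]
  ring

lemma Ilog_Ioi (σ : ℝ) (hσ : 0 < σ) :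
    ∫ x in Ioi (0:ℝ), Real.exp (-x^2/(2*σ^2)) * Real.log x
      = σ * Real.sqrt (2*π) * (2 * Real.log σ - Real.log 2
          - Real.eulerMascheroniConstant) / 4 := by
  have hsub := gauss_sub σ hσ (fun t => t ^ (-(1/2) : ℝ) * (Real.log t * Real.exp (-t)))
  rw [gamma_half_deriv_integral] at hsub
  have heq : ∫ x in Ioi (0:ℝ), (x/σ^2) *
        ((x^2/(2*σ^2)) ^ (-(1/2):ℝ) * (Real.log (x^2/(2*σ^2)) * Real.exp (-(x^2/(2*σ^2)))))
      = ∫ x in Ioi (0:ℝ), (Real.sqrt 2/σ) *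
          (2 * (Real.exp (-x^2/(2*σ^2)) * Real.log x)
            - Real.log (2*σ^2) * Real.exp (-x^2/(2*σ^2))) := by
    refine setIntegral_congr_fun measurableSet_Ioi (fun x hx => ?_)
    have hx' : (0:ℝ) < x := hx
    have hrp : (x^2/(2*σ^2)) ^ (-(1/2):ℝ) = Real.sqrt 2 * σ / x := by
      rw [show (-(1/2):ℝ) = -((1:ℝ)/2) by norm_num,
        Real.rpow_neg (by positivity), sqrt_half_pow σ x hσ hx', inv_div]
    have hlog : Real.log (x^2/(2*σ^2)) = 2 * Real.log x - Real.log (2*σ^2) := by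
      rw [Real.log_div (by positivity) (by positivity), Real.log_pow]
      push_cast; ring
    rw [hrp, hlog, show -(x^2/(2*σ^2)) = -x^2/(2*σ^2) by ring]
    have hs2 : Real.sqrt 2 ≠ 0 := by positivity
    field_simp
  have hIntLog : IntegrableOn (fun x => Real.exp (-x^2/(2*σ^2)) * Real.log x) (Ioi 0) := by
    have h := integrableOn_exp_log (1/(2*σ^2)) (by positivity)
    refine h.congr_fun (fun x _ => ?_) measurableSet_Ioi
    congr 2
    field_simp
  have hIntExp : IntegrableOn (fun x => Real.exp (-x^2/(2*σ^2))) (Ioi 0) := by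
    have h : IntegrableOn (fun x : ℝ => Real.exp (-(1/(2*σ^2)) * x^2)) (Ioi 0) :=
      (integrable_exp_neg_mul_sq (show (0:ℝ) < 1/(2*σ^2) by positivity)).integrableOn
    refine h.congr_fun (fun x _ => ?_) measurableSet_Ioi
    congr 1
    field_simp
  rw [heq, integral_const_mul] at hsub
  rw [integral_sub ((hIntLog.const_mul 2)) (hIntExp.const_mul _), integral_const_mul,
    integral_const_mul, Iexp_Ioi σ hσ] at hsub
  have hs2 : (0:ℝ) < Real.sqrt 2 := by positivity
  have hsqrt : Real.sqrt 2 * Real.sqrt π = Real.sqrt (2*π) :=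
    (Real.sqrt_mul (by norm_num) π).symm
  have h22 : Real.sqrt 2 * Real.sqrt 2 = 2 := Real.mul_self_sqrt (by norm_num)
  have hlog2σ : Real.log (2*σ^2) = Real.log 2 + 2 * Real.log σ := by
    rw [Real.log_mul (by norm_num) (by positivity), Real.log_pow]
    push_cast; ring
  set γ := Real.eulerMascheroniConstant with hγ
  set I := ∫ x in Ioi (0:ℝ), Real.exp (-x^2/(2*σ^2)) * Real.log x with hIdef
  have hne : Real.sqrt 2 / σ ≠ 0 := by positivity
  have hY : 2 * I - Real.log (2*σ^2) * (σ * Real.sqrt (2*π)/2)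
      = (-Real.sqrt π * (γ + 2*Real.log 2)) / (Real.sqrt 2 / σ) := by
    rw [eq_div_iff hne, hsub]; ring
  have hdiv : (-Real.sqrt π * (γ + 2*Real.log 2)) / (Real.sqrt 2 / σ)
      = -((γ + 2*Real.log 2) * σ * (Real.sqrt (2*π)/2)) := by
    rw [div_eq_iff hne, ← hsqrt]
    field_simp
    ring_nf
    rw [Real.sq_sqrt (by norm_num : (0:ℝ) ≤ 2)]
    ring
  rw [hdiv, hlog2σ] at hY
  linear_combination hY / 2

/-- Differential floating-point entropy of the centered Gaussian. -/
theorem fp_entropy_gaussian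
    (σ : ℝ) (hσ : 0 < σ)
    (f : ℝ → ℝ)
    (hf : ∀ x, f x = Real.exp (-x ^ 2 / (2 * σ ^ 2)) / (σ * Real.sqrt (2 * π))) :
    -∫ x, f x * Real.logb 2 (|x| * f x)
      = 1 / 2 + (1 / 2) * Real.logb 2 (2 * π * Real.exp 1)
        + Real.eulerMascheroniConstant / (2 * Real.log 2) := by
  have hπ : (0:ℝ) < π := Real.pi_pos
  have hS : (0:ℝ) < Real.sqrt (2*π) := Real.sqrt_pos.2 (by positivity)
  have hc0 : (0:ℝ) < σ * Real.sqrt (2*π) := by positivity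
  set γ := Real.eulerMascheroniConstant with hγ
  set S := Real.sqrt (2*π) with hSdef
  set c := σ * S with hc
  set E : ℝ → ℝ := fun x => Real.exp (-x^2/(2*σ^2)) with hE
  -- integrability on Ioi 0
  have iLog : IntegrableOn (fun x => E x * Real.log x) (Ioi 0) := by
    have h := integrableOn_exp_log (1/(2*σ^2)) (by positivity)
    refine h.congr_fun (fun x _ => ?_) measurableSet_Ioi
    simp only [hE]
    congr 2
    field_simp
  have iExp : IntegrableOn E (Ioi 0) := by
    have h : IntegrableOn (fun x : ℝ => Real.exp (-(1/(2*σ^2)) * x^2)) (Ioi 0) :=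
      (integrable_exp_neg_mul_sq (show (0:ℝ) < 1/(2*σ^2) by positivity)).integrableOn
    refine h.congr_fun (fun x _ => ?_) measurableSet_Ioi
    simp only [hE]
    congr 1
    field_simp
  have iSq : IntegrableOn (fun x => x^2 * E x) (Ioi 0) := by
    have h := integrableOn_rpow_mul_exp_neg_mul_sq (show (0:ℝ) < 1/(2*σ^2) by positivity)
      (show (-1:ℝ) < 2 by norm_num)
    refine h.congr_fun (fun x hx => ?_) measurableSet_Ioi
    have hx' : (0:ℝ) < x := hx
    simp only [hE]
    rw [show ((2:ℝ)) = ((2:ℕ):ℝ) by norm_num, Real.rpow_natCast]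
    congr 2
    field_simp
  -- whole-line integrability
  have habsA : (fun x => E |x| * Real.log |x|) = fun x => E x * Real.log |x| := by
    funext x; simp only [hE, sq_abs]
  have habsB : (fun x => |x|^2 * E |x|) = fun x => x^2 * E x := by
    funext x; simp only [hE, sq_abs]
  have habsC : (fun x : ℝ => E |x|) = E := by
    funext x; simp only [hE, sq_abs]
  have intA : Integrable (fun x => E x * Real.log |x|) := by
    have := integrable_comp_abs iLog; rwa [habsA] at this
  have intB : Integrable (fun x => x^2 * E x) := by
    have := integrable_comp_abs iSq; rwa [habsB] at this
  have intC : Integrable E := by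
    have := integrable_comp_abs iExp; rwa [habsC] at this
  -- whole-line values
  have VA : ∫ x, E x * Real.log |x| = σ * S * (2 * Real.log σ - Real.log 2 - γ) / 2 := by
    rw [← habsA, integral_comp_abs (f := fun x => E x * Real.log x), Ilog_Ioi σ hσ]
    ring
  have VB : ∫ x, x^2 * E x = σ^3 * S := by
    rw [← habsB, integral_comp_abs (f := fun x => x^2 * E x), Isq_Ioi σ hσ]
    ring
  have VC : ∫ x, E x = σ * S := by
    rw [← habsC, integral_comp_abs (f := fun x => E x), Iexp_Ioi σ hσ]
    ring
  -- a.e. pointwise identity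
  have hlog2 : Real.log 2 ≠ 0 := ne_of_gt (Real.log_pos (by norm_num))
  have h0 : ∀ᵐ (x:ℝ), x ≠ 0 := by
    rw [ae_iff]
    convert Real.volume_singleton (a := 0) using 2
    ext x; simp
  have hae : (fun x => f x * Real.logb 2 (|x| * f x))
      =ᵐ[volume] fun x => ((1/c) * (E x * Real.log |x|) - (1/(2*σ^2*c)) * (x^2 * E x)
          - (Real.log c / c) * E x) / Real.log 2 := by
    filter_upwards [h0] with x hx
    have hEx : (0:ℝ) < E x := Real.exp_pos _
    have hfx : f x = E x / c := by rw [hf x, hE, hc, hSdef]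
    have habs : (0:ℝ) < |x| := abs_pos.2 hx
    rw [hfx, Real.logb, Real.log_mul (ne_of_gt habs) (by positivity),
      Real.log_div (ne_of_gt hEx) (ne_of_gt hc0), hE, Real.log_exp]
    field_simp
    ring
  have int1 : Integrable (fun x => (1/c) * (E x * Real.log |x|)
      - (1/(2*σ^2*c)) * (x^2 * E x)) volume := (intA.const_mul _).sub (intB.const_mul _)
  have int2 : Integrable (fun x => (Real.log c / c) * E x) volume := intC.const_mul _
  rw [integral_congr_ae hae, integral_div, integral_sub int1 int2,
    integral_sub (intA.const_mul _) (intB.const_mul _),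
    integral_const_mul, integral_const_mul, integral_const_mul, VA, VB, VC]
  -- numeric endgame
  have hlogc : Real.log c = Real.log σ + Real.log (2*π) / 2 := by
    rw [hc, hSdef, Real.log_mul (ne_of_gt hσ) (ne_of_gt hS), Real.log_sqrt (by positivity)]
  have hlogb : Real.logb 2 (2*π*Real.exp 1) = (Real.log (2*π) + 1) / Real.log 2 := by
    rw [Real.logb, Real.log_mul (by positivity) (Real.exp_ne_zero 1), Real.log_exp]
  rw [hlogc, hlogb]
  have hSne : S ≠ 0 := ne_of_gt hS
  have hσne : σ ≠ 0 := ne_of_gt hσ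
  rw [hc]
  field_simp
  ring
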